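/- Let t₀ < T. Let λ̃ : ℝ → ℝ be continuous with λ̃(t) > 0 for all t ∈ [t₀,T], set Λ̃(t) = ∫_{t₀}^t λ̃(τ)dτ, G̃(t) = exp(−Λ̃(t)), and q(t) = λ̃(t)·G̃(t). Let κ > 0 and let p : ℝ → ℝ satisfy p(t) = κ·q(t) for all t ∈ (t₀,T), and set F = ∫_{t₀}^T p(τ)dτ = κ·(1 − G̃(T)); assume F ≤ 1. Then for every t ∈ (t₀,T), both 1 − ∫_{t₀}^t p(τ)dτ and G̃(t) + (1 − G̃(T))/F − 1 are strictly positive, and the hazard of p satisfies p(t)/(1 − ∫_{t₀}^t p(τ)dτ) = G̃(t)·λ̃(t)/(G̃(t) + (1 − G̃(T))/F − 1). -/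

import Mathlib

open MeasureTheory intervalIntegral

/-- **Theorem (intensity recovery from a surrogate intensity and a survival
probability).** Let `λ̃` be continuous and positive on `[t₀,T]`, with cumulative
intensity `Λ̃`, survivor `G̃ = exp(−Λ̃)`, and unnormalized density `q = λ̃·G̃`. If the
conditional density `p` satisfies `p = κ·q` on `(t₀,T)` for some `κ > 0` and
`F = ∫_{t₀}^T p ≤ 1`, then `F = κ(1 − G̃ T)`, and for every `t ∈ (t₀,T)` both
`1 − ∫_{t₀}^t p` and `G̃ t + (1 − G̃ T)/F − 1` are strictly positive and the hazard of
`p` equals `G̃ t · λ̃ t / (G̃ t + (1 − G̃ T)/F − 1)`. -/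
theorem hazard_recovery_from_survival
    {t₀ T : ℝ} (htT : t₀ < T)
    (lam : ℝ → ℝ) (hlamc : Continuous lam)
    (hlampos : ∀ t ∈ Set.Icc t₀ T, 0 < lam t)
    (Lam G q : ℝ → ℝ)
    (hLam : ∀ t, Lam t = ∫ τ in t₀..t, lam τ)
    (hG : ∀ t, G t = Real.exp (-Lam t))
    (hq : ∀ t, q t = lam t * G t)
    (κ : ℝ) (hκ : 0 < κ)
    (p : ℝ → ℝ) (hp : ∀ t ∈ Set.Ioo t₀ T, p t = κ * q t)
    (F : ℝ) (hF : F = ∫ τ in t₀..T, p τ) (hF1 : F ≤ 1) :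
    F = κ * (1 - G T) ∧
      ∀ t ∈ Set.Ioo t₀ T,
        (0 < 1 - ∫ τ in t₀..t, p τ) ∧
        (0 < G t + (1 - G T) / F - 1) ∧
        p t / (1 - ∫ τ in t₀..t, p τ) =
          G t * lam t / (G t + (1 - G T) / F - 1) := by
  -- derivative of Lam
  have hLamD : ∀ t : ℝ, HasDerivAt Lam (lam t) t := by
    intro t
    have h : HasDerivAt (fun u => ∫ τ in t₀..u, lam τ) (lam t) t :=
      intervalIntegral.integral_hasDerivAt_right (hlamc.intervalIntegrable t₀ t)
        (hlamc.stronglyMeasurableAtFilter _ _) hlamc.continuousAt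
    have : Lam = fun u => ∫ τ in t₀..u, lam τ := funext hLam
    rw [this]; exact h
  have hGD : ∀ t : ℝ, HasDerivAt G (-(lam t * G t)) t := by
    intro t
    have h : HasDerivAt (fun u => Real.exp (-Lam u)) (Real.exp (-Lam t) * (-(lam t))) t :=
      ((hLamD t).neg).exp
    have hGe : G = fun u => Real.exp (-Lam u) := funext hG
    rw [hG t, hGe]
    convert h using 1
    ring
  have hGc : Continuous G := by
    have := fun t => (hGD t).continuousAt
    exact continuous_iff_continuousAt.mpr this
  have hqc : Continuous q := by
    have : q = fun t => lam t * G t := funext hq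
    rw [this]; exact hlamc.mul hGc
  -- integral of q
  have hintq : ∀ a b : ℝ, (∫ τ in a..b, q τ) = G a - G b := by
    intro a b
    have := intervalIntegral.integral_eq_sub_of_hasDerivAt
      (f := fun u => -G u) (f' := q)
      (fun x _ => by rw [hq x, ← neg_neg (lam x * G x)]; exact (hGD x).neg)
      (hqc.intervalIntegrable a b)
    rw [this]; ring
  have hGt₀ : G t₀ = 1 := by
    rw [hG t₀, hLam t₀, intervalIntegral.integral_same, neg_zero, Real.exp_zero]
  -- ∫ p on [t₀, t] for t₀ < t ≤ T
  have hintp : ∀ t : ℝ, t₀ < t → t ≤ T → (∫ τ in t₀..t, p τ) = κ * (1 - G t) := by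
    intro t ht₀ htT'
    have hae : ∀ᵐ x : ℝ, x ∈ Set.uIoc t₀ t → p x = κ * q x := by
      have h0 : (volume : Measure ℝ) {t} = 0 := Real.volume_singleton
      have h1 : ∀ᵐ x : ℝ, x ∉ ({t} : Set ℝ) :=
        (MeasureTheory.measure_eq_zero_iff_ae_notMem).mp h0
      filter_upwards [h1] with x hx hxI
      rw [Set.uIoc_of_le ht₀.le] at hxI
      have hxt : x ≠ t := by simpa using hx
      have hxlt : x < t := lt_of_le_of_ne hxI.2 hxt
      exact hp x ⟨hxI.1, lt_of_lt_of_le hxlt htT'⟩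
    calc (∫ τ in t₀..t, p τ) = ∫ τ in t₀..t, κ * q τ :=
          intervalIntegral.integral_congr_ae hae
      _ = κ * ∫ τ in t₀..t, q τ := intervalIntegral.integral_const_mul κ q
      _ = κ * (G t₀ - G t) := by rw [hintq]
      _ = κ * (1 - G t) := by rw [hGt₀]
  have hFG : F = κ * (1 - G T) := by rw [hF, hintp T htT le_rfl]
  -- strict monotonicity facts
  have hLamlt : ∀ a b : ℝ, t₀ ≤ a → a < b → b ≤ T → Lam a < Lam b := by
    intro a b ha hab hb
    have hpos : 0 < ∫ τ in a..b, lam τ := by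
      apply intervalIntegral.intervalIntegral_pos_of_pos_on
        (hlamc.intervalIntegrable a b)
      · intro x hx
        exact hlampos x ⟨le_trans ha hx.1.le, le_trans hx.2.le hb⟩
      · exact hab
    have : Lam b - Lam a = ∫ τ in a..b, lam τ := by
      rw [hLam a, hLam b, intervalIntegral.integral_interval_sub_left
        (hlamc.intervalIntegrable t₀ b) (hlamc.intervalIntegrable t₀ a)]
    linarith
  have hGlt : ∀ a b : ℝ, t₀ ≤ a → a < b → b ≤ T → G b < G a := by
    intro a b ha hab hb
    rw [hG a, hG b]
    exact Real.exp_lt_exp.mpr (neg_lt_neg (hLamlt a b ha hab hb))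
  have hGTlt1 : G T < 1 := by
    rw [← hGt₀]; exact hGlt t₀ T le_rfl htT le_rfl
  have hFpos : 0 < F := by
    rw [hFG]; exact mul_pos hκ (by linarith)
  have hdivκ : (1 - G T) / F = 1 / κ := by
    rw [hFG]
    rw [mul_comm, div_mul_eq_div_div, div_self (by linarith)]
  refine ⟨hFG, fun t ht => ?_⟩
  have hGt : G T < G t := hGlt t T ht.1.le ht.2 le_rfl
  have hpt : (∫ τ in t₀..t, p τ) = κ * (1 - G t) := hintp t ht.1 ht.2.le
  have h1 : 0 < 1 - ∫ τ in t₀..t, p τ := by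
    rw [hpt]
    nlinarith [hFG, hF1]
  have h1' : 0 < 1 - κ * (1 - G t) := by rw [← hpt]; exact h1
  have hrepr : G t + 1 / κ - 1 = (1 - κ * (1 - G t)) / κ := by
    field_simp; ring
  have h2 : 0 < G t + (1 - G T) / F - 1 := by
    rw [hdivκ, hrepr]
    exact div_pos h1' hκ
  refine ⟨h1, h2, ?_⟩
  rw [hpt, hp t ht, hq t, hdivκ, hrepr, div_div_eq_mul_div]
  ring
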